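/- arXiv:2008.08240 — 3 statements merged into one kernel-verified Lean document; each statement's English description precedes it below -/
import Mathlib

section
/- Let f be a probability density on ℝ that is symmetric about μ and strictly unimodal about μ, and let a > 0 and m ∈ ℝ. Let X be the random variable with the truncated density g(x) = f(x) / P_f([m−a, m+a]) for x ∈ [m−a, m+a] and g(x) = 0 otherwise (where P_f([m−a, m+a]) = ∫_{m−a}^{m+a} f(x) dx > 0). Then for every m ≠ μ one has (E[X] − m)(μ − m) > 0; that is, if m < μ then E[X] > m, and if m > μ then E[X] < m. -/
open MeasureTheory

/-- **Truncated mean of a symmetric strictly unimodal density.**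
If `f` is a probability density on `ℝ`, symmetric about `μ` and strictly
unimodal about `μ`, and `X` has the density `f` truncated to `[m-a, m+a]`
(with positive mass there), then `(E[X] - m) * (μ - m) > 0` for every `m ≠ μ`. -/
theorem truncated_mean_towards_mode
    (f : ℝ → ℝ) (μ : ℝ)
    (hf_nonneg : ∀ x, 0 ≤ f x)
    (hf_int : Integrable f)
    (hf_mass : ∫ x, f x = 1)
    (hf_symm : ∀ y : ℝ, f (μ + y) = f (μ - y))
    (hf_incr : ∀ x₁ x₂ : ℝ, x₁ < x₂ → x₂ ≤ μ → f x₁ < f x₂)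
    (hf_decr : ∀ x₁ x₂ : ℝ, μ ≤ x₁ → x₁ < x₂ → f x₂ < f x₁)
    (a m : ℝ) (ha : 0 < a)
    (hP : 0 < ∫ x in Set.Icc (m - a) (m + a), f x)
    (hm : m ≠ μ) :
    ((∫ x in Set.Icc (m - a) (m + a), x * f x) /
        (∫ x in Set.Icc (m - a) (m + a), f x) - m) * (μ - m) > 0 := by
  -- symmetry: f (2μ - x) = f x
  have hsymm' : ∀ x : ℝ, f x = f (2 * μ - x) := by
    intro x
    have := hf_symm (x - μ)
    have h1 : μ + (x - μ) = x := by ring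
    have h2 : μ - (x - μ) = 2 * μ - x := by ring
    rw [h1, h2] at this
    exact this
  -- convert Icc set integrals to interval integrals
  have hIcc : ∀ g : ℝ → ℝ, ∫ x in Set.Icc (m - a) (m + a), g x
      = ∫ x in (m - a)..(m + a), g x := by
    intro g
    rw [intervalIntegral.integral_of_le (by linarith), ← integral_Icc_eq_integral_Ioc]
  -- integrability helpers
  have hfI : ∀ c d : ℝ, IntervalIntegrable f volume c d := fun c d =>
    hf_int.intervalIntegrable
  have hxf : ∀ c d : ℝ, IntervalIntegrable (fun x => (x - m) * f x) volume c d := by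
    intro c d
    exact (hfI c d).continuousOn_mul (by fun_prop)
  have hxfplain : ∀ c d : ℝ, IntervalIntegrable (fun x => x * f x) volume c d := by
    intro c d
    exact (hfI c d).continuousOn_mul (by fun_prop)
  have hmf : ∀ c d : ℝ, IntervalIntegrable (fun x => m * f x) volume c d := by
    intro c d
    exact (hfI c d).continuousOn_mul (by fun_prop)
  have hfp : Integrable (fun t => f (m + t)) := hf_int.comp_add_left m
  have hfm : Integrable (fun t => f (m - t)) := by
    have := hfp.comp_neg
    simpa [sub_eq_add_neg] using this
  have hgp : ∀ c d : ℝ, IntervalIntegrable (fun t => t * f (m + t)) volume c d := by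
    intro c d
    exact hfp.intervalIntegrable.continuousOn_mul (by fun_prop)
  have hgm : ∀ c d : ℝ, IntervalIntegrable (fun t => t * f (m - t)) volume c d := by
    intro c d
    exact hfm.intervalIntegrable.continuousOn_mul (by fun_prop)
  -- the key integral
  set S : ℝ := ∫ x in (m - a)..(m + a), (x - m) * f x with hS
  -- substitution x = m + t
  have step1 : S = ∫ t in (-a)..a, t * f (m + t) := by
    have h := intervalIntegral.integral_comp_add_left (a := -a) (b := a)
      (fun x => (x - m) * f x) m
    simp only [add_sub_cancel_left] at h
    rw [show m + -a = m - a from by ring] at h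
    exact h.symm
  -- split and fold
  have step2 : (∫ t in (-a)..(0:ℝ), t * f (m + t)) + ∫ t in (0:ℝ)..a, t * f (m + t)
      = ∫ t in (-a)..a, t * f (m + t) :=
    intervalIntegral.integral_add_adjacent_intervals (hgp _ _) (hgp _ _)
  have step3 : (∫ t in (-a)..(0:ℝ), t * f (m + t))
      = ∫ t in (0:ℝ)..a, -(t * f (m - t)) := by
    have h := intervalIntegral.integral_comp_neg (a := (0:ℝ)) (b := a)
      (fun t => t * f (m + t))
    simp only [neg_zero] at h
    rw [← h]
    apply intervalIntegral.integral_congr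
    intro t _
    simp only [← sub_eq_add_neg]
    ring
  have hneg : IntervalIntegrable (fun t => -(t * f (m - t))) volume 0 a := by
    exact (hgm 0 a).neg
  have hint : IntervalIntegrable (fun t => t * (f (m + t) - f (m - t))) volume 0 a := by
    have hfun : (fun t => t * (f (m + t) - f (m - t)))
        = fun t => -(t * f (m - t)) + t * f (m + t) := by funext t; ring
    rw [hfun]
    exact hneg.add (hgp 0 a)
  have step4 : S = ∫ t in (0:ℝ)..a, t * (f (m + t) - f (m - t)) := by
    rw [step1, ← step2, step3]
    rw [← intervalIntegral.integral_add hneg (hgp 0 a)]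
    apply intervalIntegral.integral_congr
    intro t _
    ring
  -- pointwise sign of f(m+t) - f(m-t)
  have key_lt : m < μ → ∀ t : ℝ, 0 < t → f (m - t) < f (m + t) := by
    intro hmlt t ht
    by_cases hc : m + t ≤ μ
    · exact hf_incr _ _ (by linarith) hc
    · have h1 : f (m - t) = f (2 * μ - (m - t)) := hsymm' _
      have h2 : f (2 * μ - (m - t)) < f (m + t) := by
        apply hf_decr _ _ (by linarith) (by linarith)
      linarith [h1 ▸ h2]
  have key_gt : μ < m → ∀ t : ℝ, 0 < t → f (m + t) < f (m - t) := by
    intro hmgt t ht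
    by_cases hc : μ ≤ m - t
    · exact hf_decr _ _ hc (by linarith)
    · have h1 : f (m + t) = f (2 * μ - (m + t)) := hsymm' _
      have h2 : f (2 * μ - (m + t)) < f (m - t) := by
        apply hf_incr _ _ (by linarith) (by linarith)
      linarith [h1 ▸ h2]
  -- sign of S * (μ - m)
  have hSsign : 0 < S * (μ - m) := by
    rcases lt_or_gt_of_ne hm with hlt | hgt
    · have hSpos : 0 < S := by
        rw [step4]
        apply intervalIntegral.intervalIntegral_pos_of_pos_on
        · exact hint
        · intro t ht
          have := key_lt hlt t ht.1
          nlinarith [ht.1]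
        · exact ha
      exact mul_pos hSpos (by linarith)
    · have hSneg : S < 0 := by
        have : 0 < -S := by
          rw [step4, ← intervalIntegral.integral_neg]
          apply intervalIntegral.intervalIntegral_pos_of_pos_on
          · exact hint.neg
          · intro t ht
            have := key_gt hgt t ht.1
            nlinarith [ht.1]
          · exact ha
        linarith
      exact mul_pos_of_neg_of_neg hSneg (by linarith)
  -- assemble
  rw [hIcc (fun x => x * f x), hIcc f] at *
  set P : ℝ := ∫ x in (m - a)..(m + a), f x with hPdef
  set A : ℝ := ∫ x in (m - a)..(m + a), x * f x with hA
  have hAmP : S = A - m * P := by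
    rw [hS, hA, hPdef, ← intervalIntegral.integral_const_mul,
      ← intervalIntegral.integral_sub (hxfplain _ _) (hmf _ _)]
    congr 1
    ext x
    ring
  have hfrac : A / P - m = S / P := by
    rw [hAmP]
    field_simp
  rw [hfrac, div_mul_eq_mul_div]
  exact div_pos hSsign hP
end

section
/- Let C be a cost function assigning a real number C(a, b) to each pair of integers 1 ≤ a ≤ b, satisfying the superadditivity condition C(a, c) ≥ C(a, b) + C(b+1, c) for all a ≤ b < c. Let F : ℕ → ℝ be any function and β ∈ ℝ. If for some integers s < t one has F(s) + C(s+1, t) ≥ F(t), then for every t' > t, F(t) + C(t+1, t') + β ≤ F(s) + C(s+1, t') + β; consequently the candidate s can never yield a strictly lower cost than t as the last changepoint before any future time t', and can be pruned from the search. -/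
/-- **PELT-type pruning is safe.**
If the segment cost `C` is superadditive, `C(a,c) ≥ C(a,b) + C(b+1,c)` for all
`1 ≤ a ≤ b < c`, and at some time `t > s` we have `F(s) + C(s+1,t) ≥ F(t)`,
then for every future time `t' > t` the candidate `t` is at least as good as
the candidate `s` as the last changepoint:
`F(t) + C(t+1,t') + β ≤ F(s) + C(s+1,t') + β`. -/
theorem pelt_pruning_safe
    (C : ℕ → ℕ → ℝ)
    (hC : ∀ a b c : ℕ, 1 ≤ a → a ≤ b → b < c → C a b + C (b + 1) c ≤ C a c)
    (F : ℕ → ℝ) (β : ℝ) (s t : ℕ) (hst : s < t)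
    (hprune : F t ≤ F s + C (s + 1) t) :
    ∀ t' : ℕ, t < t' → F t + C (t + 1) t' + β ≤ F s + C (s + 1) t' + β := by
  intro t' ht
  have h := hC (s + 1) t t' (Nat.succ_le_succ (Nat.zero_le s)) hst ht
  linarith
end

section
/- Let f be a probability density on ℝ that is symmetric about μ and strictly unimodal about μ. Fix w ∈ ℝ with w > μ, a > 0, and γ ∈ (0, 1], and let X be the random variable with density proportional to f restricted to the interval (w − a, w + a). Then E[w + γ(X − w)] < w; symmetrically, if w < μ then E[w + γ(X − w)] > w. In particular, an estimate updated by w ↦ w + γ(X − w) from an accepted point X truncated to a symmetric window around the current estimate moves in expectation strictly towards μ whenever w ≠ μ. -/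
open MeasureTheory

/-- **The running-mean update moves in expectation towards the mode.**
Let `f` be a probability density on `ℝ`, symmetric and strictly unimodal about
`μ`, let `a > 0`, `γ ∈ (0, 1]`, and let `X` have density proportional to `f`
restricted to `(w - a, w + a)`. Then the updated estimate `w + γ(X - w)` moves
in expectation strictly towards `μ`: if `w > μ` then `E[w + γ(X - w)] < w`,
and if `w < μ` then `E[w + γ(X - w)] > w`. -/
theorem update_moves_towards_mode
    (f : ℝ → ℝ) (μ : ℝ)
    (hf_nonneg : ∀ x, 0 ≤ f x)
    (hf_int : Integrable f)
    (hf_mass : ∫ x, f x = 1)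
    (hf_symm : ∀ y : ℝ, f (μ + y) = f (μ - y))
    (hf_incr : ∀ x₁ x₂ : ℝ, x₁ < x₂ → x₂ ≤ μ → f x₁ < f x₂)
    (hf_decr : ∀ x₁ x₂ : ℝ, μ ≤ x₁ → x₁ < x₂ → f x₂ < f x₁)
    (w a γ : ℝ) (ha : 0 < a) (hγ : γ ∈ Set.Ioc (0 : ℝ) 1) :
    (μ < w →
      w + γ * ((∫ x in Set.Ioo (w - a) (w + a), x * f x) /
          (∫ x in Set.Ioo (w - a) (w + a), f x) - w) < w) ∧
    (w < μ →
      w < w + γ * ((∫ x in Set.Ioo (w - a) (w + a), x * f x) /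
          (∫ x in Set.Ioo (w - a) (w + a), f x) - w)) := by
  obtain ⟨hγ0, hγ1⟩ := hγ
  have hf_pos : ∀ x, 0 < f x := by
    intro x
    rcases le_or_gt x μ with h | h
    · exact lt_of_le_of_lt (hf_nonneg (x - 1)) (hf_incr (x - 1) x (by linarith) h)
    · exact lt_of_le_of_lt (hf_nonneg (x + 1)) (hf_decr x (x + 1) h.le (by linarith))
  have hwa : w - a < w + a := by linarith
  have hfm : AEStronglyMeasurable f volume := hf_int.1
  -- integrability of (x - w) * f x on the closed window, hence interval integrable
  have hc : IntervalIntegrable (fun x => (x - w) * f x) volume (w - a) (w + a) := by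
    rw [intervalIntegrable_iff']
    refine Integrable.mono ((hf_int.const_mul a).integrableOn)
      ((aestronglyMeasurable_id.sub aestronglyMeasurable_const).mul hfm).restrict ?_
    filter_upwards [ae_restrict_mem measurableSet_uIcc] with x hx
    rw [Set.uIcc_of_le hwa.le] at hx
    have hb : |x - w| ≤ a := by
      rw [abs_le]; constructor <;> [linarith [hx.1]; linarith [hx.2]]
    have : ‖(x - w) * f x‖ = |x - w| * f x := by
      rw [Real.norm_eq_abs, abs_mul, abs_of_nonneg (hf_nonneg x)]
    rw [this, Real.norm_eq_abs, abs_mul, abs_of_nonneg (hf_nonneg x),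
      abs_of_pos ha]
    exact mul_le_mul_of_nonneg_right hb (hf_nonneg x)
  -- interval integrability of the two shifted pieces on 0..a
  have hplus : IntervalIntegrable (fun t => t * f (w + t)) volume 0 a := by
    have := (hc.comp_add_left w).mono_set
      (Set.uIcc_subset_uIcc
        (show (0:ℝ) ∈ Set.uIcc (w - a - w) (w + a - w) from
          Set.mem_uIcc.mpr (Or.inl ⟨by linarith, by linarith⟩))
        (show a ∈ Set.uIcc (w - a - w) (w + a - w) from
          Set.mem_uIcc.mpr (Or.inl ⟨by linarith, by linarith⟩)))
    simpa [add_sub_cancel_left] using this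
  have hminus : IntervalIntegrable (fun t => t * f (w - t)) volume 0 a := by
    have h1 := ((hc.comp_sub_left w).neg).mono_set
      (Set.uIcc_subset_uIcc
        (show (0:ℝ) ∈ Set.uIcc (w - (w - a)) (w - (w + a)) from
          Set.mem_uIcc.mpr (Or.inr ⟨by linarith, by linarith⟩))
        (show a ∈ Set.uIcc (w - (w - a)) (w - (w + a)) from
          Set.mem_uIcc.mpr (Or.inr ⟨by linarith, by linarith⟩)))
    have h2 : (fun t => t * f (w - t)) = -fun x => (w - x - w) * f (w - x) := by
      funext t; simp only [Pi.neg_apply]; ring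
    rw [h2]; exact h1
  have hplusneg : IntervalIntegrable (fun t => t * f (w + t)) volume (-a) 0 := by
    have := (hc.comp_add_left w).mono_set
      (Set.uIcc_subset_uIcc
        (show -a ∈ Set.uIcc (w - a - w) (w + a - w) from
          Set.mem_uIcc.mpr (Or.inl ⟨by linarith, by linarith⟩))
        (show (0:ℝ) ∈ Set.uIcc (w - a - w) (w + a - w) from
          Set.mem_uIcc.mpr (Or.inl ⟨by linarith, by linarith⟩)))
    simpa [add_sub_cancel_left] using this
  -- substitution x ↦ w + t on the whole window
  have hsub1 : (∫ t in (-a)..a, t * f (w + t)) = ∫ x in (w - a)..(w + a), (x - w) * f x := by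
    have := intervalIntegral.integral_comp_add_left (a := -a) (b := a)
      (fun x => (x - w) * f x) w
    simpa [add_sub_cancel_left, sub_eq_add_neg, add_comm] using this
  -- fold the negative half onto the positive half
  have hsub2 : (∫ t in (-a)..0, t * f (w + t)) = -∫ t in (0:ℝ)..a, t * f (w - t) := by
    have := intervalIntegral.integral_comp_neg (a := (0:ℝ)) (b := a)
      (fun t => t * f (w + t))
    have h2 : (∫ x in (0:ℝ)..a, -x * f (w + -x)) = ∫ x in (-a)..(0:ℝ), x * f (w + x) := by
      simpa using this
    rw [← h2]
    rw [← intervalIntegral.integral_neg]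
    congr 1; funext x; ring_nf
  have hkey : (∫ x in (w - a)..(w + a), (x - w) * f x)
      = ∫ t in (0:ℝ)..a, t * (f (w + t) - f (w - t)) := by
    rw [← hsub1, ← intervalIntegral.integral_add_adjacent_intervals hplusneg hplus, hsub2,
      neg_add_eq_sub, ← intervalIntegral.integral_sub hplus hminus]
    congr 1; funext t; ring
  -- set integrals to interval integrals
  have hIoo_f : (∫ x in Set.Ioo (w - a) (w + a), f x) = ∫ x in (w - a)..(w + a), f x := by
    rw [intervalIntegral.integral_of_le hwa.le, integral_Ioc_eq_integral_Ioo]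
  have hIoo_xf : (∫ x in Set.Ioo (w - a) (w + a), x * f x)
      = ∫ x in (w - a)..(w + a), x * f x := by
    rw [intervalIntegral.integral_of_le hwa.le, integral_Ioc_eq_integral_Ioo]
  have hI0 : 0 < ∫ x in Set.Ioo (w - a) (w + a), f x := by
    rw [hIoo_f]
    exact intervalIntegral.intervalIntegral_pos_of_pos (hf_int.intervalIntegrable) hf_pos hwa
  -- decompose the first moment
  have hxfc : IntervalIntegrable (fun x => x * f x) volume (w - a) (w + a) := by
    have := hc.add ((hf_int.const_mul w).intervalIntegrable (a := w - a) (b := w + a))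
    have h2 : (fun x => (x - w) * f x + w * f x) = fun x => x * f x := by
      funext x; ring
    rwa [h2] at this
  have hdecomp : (∫ x in Set.Ioo (w - a) (w + a), x * f x)
      - w * ∫ x in Set.Ioo (w - a) (w + a), f x
      = ∫ t in (0:ℝ)..a, t * (f (w + t) - f (w - t)) := by
    rw [hIoo_f, hIoo_xf, ← hkey, ← intervalIntegral.integral_const_mul,
      ← intervalIntegral.integral_sub hxfc
        ((hf_int.const_mul w).intervalIntegrable)]
    congr 1; funext x; ring
  have hdiff : IntervalIntegrable (fun t => t * (f (w + t) - f (w - t))) volume 0 a := by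
    have := hplus.sub hminus
    have h2 : (fun t => t * f (w + t) - t * f (w - t))
        = fun t => t * (f (w + t) - f (w - t)) := by funext t; ring
    rwa [h2] at this
  constructor
  · intro hμw
    -- pointwise: f (w + t) < f (w - t) for t ∈ (0, a)
    have hpt : ∀ t ∈ Set.Ioo (0:ℝ) a, f (w + t) < f (w - t) := by
      intro t ht
      rcases le_or_gt μ (w - t) with h | h
      · exact hf_decr (w - t) (w + t) h (by linarith [ht.1])
      · have hrefl : f (w - t) = f (μ + (μ - (w - t))) := by
          rw [hf_symm]; congr 1; ring
        rw [hrefl]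
        exact hf_decr (μ + (μ - (w - t))) (w + t) (by linarith) (by linarith)
    have hneg : (∫ t in (0:ℝ)..a, t * (f (w + t) - f (w - t))) < 0 := by
      have hpos : 0 < ∫ t in (0:ℝ)..a, t * (f (w - t) - f (w + t)) := by
        refine intervalIntegral.intervalIntegral_pos_of_pos_on ?_ ?_ ha
        · have h2 : (fun t => t * (f (w - t) - f (w + t)))
              = -fun t => t * (f (w + t) - f (w - t)) := by
            funext t; simp only [Pi.neg_apply]; ring
          rw [h2]; exact hdiff.neg
        · intro t ht
          exact mul_pos ht.1 (sub_pos.mpr (hpt t ht))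
      have heq : (∫ t in (0:ℝ)..a, t * (f (w - t) - f (w + t)))
          = -∫ t in (0:ℝ)..a, t * (f (w + t) - f (w - t)) := by
        rw [← intervalIntegral.integral_neg]; congr 1; funext t; ring
      rw [heq] at hpos; linarith
    have h1 : (∫ x in Set.Ioo (w - a) (w + a), x * f x)
        < w * ∫ x in Set.Ioo (w - a) (w + a), f x := by linarith [hdecomp.symm ▸ hneg]
    have h2 : (∫ x in Set.Ioo (w - a) (w + a), x * f x) /
        (∫ x in Set.Ioo (w - a) (w + a), f x) < w := by
      rw [div_lt_iff₀ hI0]; linarith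
    nlinarith
  · intro hwμ
    have hpt : ∀ t ∈ Set.Ioo (0:ℝ) a, f (w - t) < f (w + t) := by
      intro t ht
      rcases le_or_gt (w + t) μ with h | h
      · exact hf_incr (w - t) (w + t) (by linarith [ht.1]) h
      · have hrefl : f (w + t) = f (μ - ((w + t) - μ)) := by
          rw [← hf_symm]; congr 1; ring
        rw [hrefl]
        exact hf_incr (w - t) (μ - ((w + t) - μ)) (by linarith) (by linarith)
    have hpos : 0 < ∫ t in (0:ℝ)..a, t * (f (w + t) - f (w - t)) := by
      refine intervalIntegral.intervalIntegral_pos_of_pos_on hdiff ?_ ha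
      intro t ht
      exact mul_pos ht.1 (sub_pos.mpr (hpt t ht))
    have h1 : w * (∫ x in Set.Ioo (w - a) (w + a), f x)
        < ∫ x in Set.Ioo (w - a) (w + a), x * f x := by linarith [hdecomp.symm ▸ hpos]
    have h2 : w < (∫ x in Set.Ioo (w - a) (w + a), x * f x) /
        (∫ x in Set.Ioo (w - a) (w + a), f x) := by
      rw [lt_div_iff₀ hI0]; linarith
    nlinarith
end
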